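/- For every j with 0 ≤ j ≤ n, the j-th derivative of the two-point Hermite interpolant H_{m,n} at s = 1 satisfies H_{m,n}^{(j)}(1)/j! = q_j. -/

import Mathlib

noncomputable def blend (m n : ℕ) (p q : ℕ → ℝ) (s : ℝ) : ℝ :=
  (∑ j ∈ Finset.range (m + 1),
      (∑ k ∈ Finset.range (m - j + 1),
          ((n + k).choose k : ℝ) * s ^ (k + j) * (1 - s) ^ (n + 1)) * p j)
  + ∑ j ∈ Finset.range (n + 1),
      (∑ k ∈ Finset.range (n - j + 1),
          ((m + k).choose k : ℝ) * s ^ (m + 1) * (1 - s) ^ (k + j)) * (-1 : ℝ) ^ j * q j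

noncomputable def bpoly (m n : ℕ) (p q : ℕ → ℝ) : Polynomial ℝ :=
  (∑ j ∈ Finset.range (m + 1),
      (∑ k ∈ Finset.range (m - j + 1),
          Polynomial.C ((n + k).choose k : ℝ) * Polynomial.X ^ (k + j)
            * (1 - Polynomial.X) ^ (n + 1)) * Polynomial.C (p j))
  + ∑ j ∈ Finset.range (n + 1),
      (∑ k ∈ Finset.range (n - j + 1),
          Polynomial.C ((m + k).choose k : ℝ) * Polynomial.X ^ (m + 1)
            * (1 - Polynomial.X) ^ (k + j)) * Polynomial.C ((-1 : ℝ) ^ j * q j)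

lemma bpoly_eval (m n : ℕ) (p q : ℕ → ℝ) (s : ℝ) :
    (bpoly m n p q).eval s = blend m n p q s := by
  simp [bpoly, blend, Polynomial.eval_finset_sum, mul_assoc]

lemma iteratedDeriv_polyEval (P : Polynomial ℝ) (k : ℕ) :
    iteratedDeriv k (fun x => P.eval x) = fun x => (Polynomial.derivative^[k] P).eval x := by
  induction k with
  | zero => simp
  | succ k ih =>
    funext x
    rw [iteratedDeriv_succ, ih, Function.iterate_succ_apply']
    exact Polynomial.deriv _

lemma key_sum (N d : ℕ) :
    ∑ k ∈ Finset.range (d + 1),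
        ((N + k).choose k : ℝ) * ((1 - Polynomial.X : Polynomial ℝ) ^ (N + 1)).coeff (d - k)
      = if d = 0 then 1 else 0 := by
  have h := PowerSeries.mk_add_choose_mul_one_sub_pow_eq_one ℝ N
  have h2 := congrArg (PowerSeries.coeff (R := ℝ) d) h
  rw [PowerSeries.coeff_mul, Finset.Nat.sum_antidiagonal_eq_sum_range_succ_mk] at h2
  have hc : ∀ l : ℕ, ((1 - Polynomial.X : Polynomial ℝ) ^ (N + 1)).coeff l
      = PowerSeries.coeff (R := ℝ) l ((1 - PowerSeries.X) ^ (N + 1)) := by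
    intro l
    rw [← Polynomial.coeff_coe, Polynomial.coe_pow, Polynomial.coe_sub, Polynomial.coe_one,
      Polynomial.coe_X]
  simp only [PowerSeries.coeff_mk, PowerSeries.coeff_one] at h2
  rw [← h2]
  refine Finset.sum_congr rfl fun k _ => ?_
  rw [hc, Nat.choose_symm_add]

lemma inner_eval (m n j j' : ℕ) (hj : j ≤ m) :
    (∑ k ∈ Finset.range (m - j' + 1),
        if k + j' ≤ j then
          ((n + k).choose k : ℝ) * ((1 - Polynomial.X : Polynomial ℝ) ^ (n + 1)).coeff (j - (k + j'))
        else 0)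
      = if j' = j then 1 else 0 := by
  by_cases h : j' ≤ j
  · have hd : ∀ k : ℕ, j - (k + j') = (j - j') - k := by
      intro k; omega
    have hsub : Finset.range (j - j' + 1) ⊆ Finset.range (m - j' + 1) := by
      apply Finset.range_subset_range.2; omega
    have hzero : ∀ k ∈ Finset.range (m - j' + 1), k ∉ Finset.range (j - j' + 1) →
        (if k + j' ≤ j then
          ((n + k).choose k : ℝ) * ((1 - Polynomial.X : Polynomial ℝ) ^ (n + 1)).coeff (j - (k + j'))
        else 0) = 0 := by
      intro k _ hk
      simp only [Finset.mem_range, not_lt] at hk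
      rw [if_neg (by omega)]
    rw [← Finset.sum_subset hsub hzero]
    have : ∀ k ∈ Finset.range (j - j' + 1),
        (if k + j' ≤ j then
          ((n + k).choose k : ℝ) * ((1 - Polynomial.X : Polynomial ℝ) ^ (n + 1)).coeff (j - (k + j'))
        else 0)
        = ((n + k).choose k : ℝ) * ((1 - Polynomial.X : Polynomial ℝ) ^ (n + 1)).coeff ((j - j') - k) := by
      intro k hk
      simp only [Finset.mem_range] at hk
      rw [if_pos (by omega), hd]
    rw [Finset.sum_congr rfl this, key_sum]
    have : j - j' = 0 ↔ j' = j := by omega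
    simp [this]
  · have : ∀ k ∈ Finset.range (m - j' + 1),
        (if k + j' ≤ j then
          ((n + k).choose k : ℝ) * ((1 - Polynomial.X : Polynomial ℝ) ^ (n + 1)).coeff (j - (k + j'))
        else 0) = 0 := by
      intro k _
      rw [if_neg (by omega)]
    rw [Finset.sum_congr rfl this, Finset.sum_const_zero, if_neg (by omega)]

lemma bpoly_coeff (m n : ℕ) (p q : ℕ → ℝ) (j : ℕ) (hj : j ≤ m) :
    (bpoly m n p q).coeff j = p j := by
  unfold bpoly
  rw [Polynomial.coeff_add, Polynomial.finset_sum_coeff, Polynomial.finset_sum_coeff]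
  have h2 : ∀ j' ∈ Finset.range (n + 1),
      ((∑ k ∈ Finset.range (n - j' + 1),
          Polynomial.C ((m + k).choose k : ℝ) * Polynomial.X ^ (m + 1)
            * (1 - Polynomial.X) ^ (k + j')) * Polynomial.C ((-1 : ℝ) ^ j' * q j')).coeff j = 0 := by
    intro j' _
    rw [Polynomial.coeff_mul_C, Polynomial.finset_sum_coeff]
    have : ∀ k ∈ Finset.range (n - j' + 1),
        (Polynomial.C ((m + k).choose k : ℝ) * Polynomial.X ^ (m + 1)
            * (1 - Polynomial.X) ^ (k + j')).coeff j = 0 := by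
      intro k _
      have heq : Polynomial.C ((m + k).choose k : ℝ) * Polynomial.X ^ (m + 1)
            * (1 - Polynomial.X) ^ (k + j')
          = (Polynomial.C ((m + k).choose k : ℝ) * (1 - Polynomial.X) ^ (k + j'))
            * Polynomial.X ^ (m + 1) := by ring
      rw [heq, Polynomial.coeff_mul_X_pow', if_neg (by omega)]
    rw [Finset.sum_congr rfl this]
    simp
  rw [Finset.sum_congr rfl h2]
  simp only [Finset.sum_const_zero, add_zero]
  have h1 : ∀ j' ∈ Finset.range (m + 1),
      ((∑ k ∈ Finset.range (m - j' + 1),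
          Polynomial.C ((n + k).choose k : ℝ) * Polynomial.X ^ (k + j')
            * (1 - Polynomial.X) ^ (n + 1)) * Polynomial.C (p j')).coeff j
        = (if j' = j then 1 else 0) * p j' := by
    intro j' _
    rw [Polynomial.coeff_mul_C, Polynomial.finset_sum_coeff]
    congr 1
    have : ∀ k ∈ Finset.range (m - j' + 1),
        (Polynomial.C ((n + k).choose k : ℝ) * Polynomial.X ^ (k + j')
            * (1 - Polynomial.X) ^ (n + 1)).coeff j
        = if k + j' ≤ j then
            ((n + k).choose k : ℝ) * ((1 - Polynomial.X : Polynomial ℝ) ^ (n + 1)).coeff (j - (k + j'))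
          else 0 := by
      intro k _
      have heq : Polynomial.C ((n + k).choose k : ℝ) * Polynomial.X ^ (k + j')
            * (1 - Polynomial.X) ^ (n + 1)
          = (Polynomial.C ((n + k).choose k : ℝ) * (1 - Polynomial.X) ^ (n + 1))
            * Polynomial.X ^ (k + j') := by ring
      rw [heq, Polynomial.coeff_mul_X_pow']
      by_cases hk : k + j' ≤ j
      · rw [if_pos hk, if_pos hk, Polynomial.coeff_C_mul]
      · rw [if_neg hk, if_neg hk]
    rw [Finset.sum_congr rfl this, inner_eval m n j j' hj]
  rw [Finset.sum_congr rfl h1]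
  have := Finset.sum_ite_eq' (Finset.range (m + 1)) j p
  simp only [boole_mul]
  rw [Finset.sum_ite_eq' (Finset.range (m + 1)) j p]
  simp [Nat.lt_succ_iff, hj]

lemma blend_iteratedDeriv_zero (m n : ℕ) (p q : ℕ → ℝ) (j : ℕ) (hj : j ≤ m) :
    iteratedDeriv j (blend m n p q) 0 = (Nat.factorial j : ℝ) * p j := by
  have hb : blend m n p q = fun s => (bpoly m n p q).eval s :=
    funext fun s => (bpoly_eval m n p q s).symm
  rw [hb, iteratedDeriv_polyEval]
  show (Polynomial.derivative^[j] (bpoly m n p q)).eval 0 = (Nat.factorial j : ℝ) * p j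
  rw [← Polynomial.coeff_zero_eq_eval_zero, Polynomial.coeff_iterate_derivative]
  rw [zero_add, bpoly_coeff m n p q j hj]
  rw [Nat.descFactorial_self, nsmul_eq_mul]

lemma blend_reflect (m n : ℕ) (p q : ℕ → ℝ) (s : ℝ) :
    blend n m (fun i => (-1 : ℝ) ^ i * q i) (fun i => (-1 : ℝ) ^ i * p i) s
      = blend m n p q (1 - s) := by
  simp only [blend, sub_sub_cancel]
  rw [add_comm]
  congr 1
  · refine Finset.sum_congr rfl fun j _ => ?_
    have : (∑ k ∈ Finset.range (m - j + 1),
        ((n + k).choose k : ℝ) * s ^ (n + 1) * (1 - s) ^ (k + j))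
        = ∑ k ∈ Finset.range (m - j + 1),
        ((n + k).choose k : ℝ) * (1 - s) ^ (k + j) * s ^ (n + 1) :=
      Finset.sum_congr rfl fun k _ => by ring
    rw [this, mul_assoc, ← mul_assoc ((-1:ℝ)^j) ((-1:ℝ)^j), ← pow_add, Even.neg_one_pow ⟨j, rfl⟩, one_mul]
  · refine Finset.sum_congr rfl fun j _ => ?_
    have : (∑ k ∈ Finset.range (n - j + 1),
        ((m + k).choose k : ℝ) * s ^ (k + j) * (1 - s) ^ (m + 1))
        = ∑ k ∈ Finset.range (n - j + 1),
        ((m + k).choose k : ℝ) * (1 - s) ^ (m + 1) * s ^ (k + j) :=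
      Finset.sum_congr rfl fun k _ => by ring
    rw [this, mul_assoc]

theorem blend_iteratedDeriv_one (m n : ℕ) (p q : ℕ → ℝ) (j : ℕ) (hj : j ≤ n) :
    iteratedDeriv j (blend m n p q) 1 / (Nat.factorial j : ℝ) = q j := by
  set F := blend n m (fun i => (-1 : ℝ) ^ i * q i) (fun i => (-1 : ℝ) ^ i * p i) with hF
  have hfun : blend m n p q = fun t : ℝ => (fun y : ℝ => F (1 + y)) (-t) := by
    funext t
    have h := blend_reflect m n p q (1 - t)
    rw [sub_sub_cancel] at h
    rw [← hF] at h
    rw [← h, sub_eq_add_neg]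
  rw [hfun, iteratedDeriv_comp_neg j (fun y : ℝ => F (1 + y)) 1,
    iteratedDeriv_comp_const_add j F 1]
  have h0 : iteratedDeriv j F (1 + -1) = (Nat.factorial j : ℝ) * ((-1 : ℝ) ^ j * q j) := by
    rw [show (1 : ℝ) + -1 = 0 by norm_num]
    exact blend_iteratedDeriv_zero n m _ _ j hj
  show ((-1 : ℝ) ^ j • iteratedDeriv j F (1 + -1)) / (Nat.factorial j : ℝ) = q j
  rw [h0, smul_eq_mul]
  have hfac : (Nat.factorial j : ℝ) ≠ 0 := Nat.cast_ne_zero.2 (Nat.factorial_ne_zero j)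
  field_simp
  rw [← pow_mul, mul_comm j 2, pow_mul, neg_one_sq, one_pow, one_mul]
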